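/- Let λ1, λ2, λ3 ∈ [0,1] and let F_γ, X_γ be the second-order trilinear PIC weights and nodes on a grid of spacing h = L/H. Then for g_y(x) = e^{-i⟨y,x⟩}, |g_y(X) − Σ_{γ∈Γ2} F_γ g_y(X_γ)| ≤ (9/2)|y|²(L/H)². -/

import Mathlib

open Finset

lemma norm_exp_I_mul_sub_one_le (s : ℝ) :
    ‖Complex.exp (Complex.I * s) - 1‖ ≤ |s| := by
  have h : Complex.exp (Complex.I * s) - 1
      = Complex.ofReal (Real.cos s - 1) + Complex.ofReal (Real.sin s) * Complex.I := by
    rw [mul_comm, Complex.exp_mul_I, ← Complex.ofReal_cos, ← Complex.ofReal_sin]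
    push_cast; ring
  have hsq : ‖Complex.exp (Complex.I * s) - 1‖ ^ 2 ≤ s ^ 2 := by
    rw [Complex.sq_norm, h, Complex.normSq_apply]
    simp only [Complex.add_re, Complex.add_im, Complex.ofReal_re, Complex.ofReal_im,
      Complex.mul_re, Complex.mul_im, Complex.I_re, Complex.I_im]
    have h1 : (Real.cos s - 1)^2 + (Real.sin s)^2 = 4 * Real.sin (s/2) ^ 2 := by
      have := Real.sin_sq_add_cos_sq s
      have h2 : Real.cos s = 1 - 2 * Real.sin (s/2)^2 := by
        have hc := Real.cos_sq (s/2)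
        rw [show 2*(s/2) = s by ring] at hc
        have hs := Real.sin_sq_add_cos_sq (s/2)
        nlinarith
      nlinarith
    have h3 : Real.sin (s/2)^2 ≤ (s/2)^2 := Real.sin_sq_le_sq
    nlinarith
  calc ‖Complex.exp (Complex.I * s) - 1‖
      = Real.sqrt (‖Complex.exp (Complex.I * s) - 1‖ ^ 2) := by
        rw [Real.sqrt_sq (norm_nonneg _)]
    _ ≤ Real.sqrt (s ^ 2) := Real.sqrt_le_sqrt hsq
    _ = |s| := Real.sqrt_sq_eq_abs s

lemma norm_exp_I_mul_sub_one_sub_le (t : ℝ) :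
    ‖Complex.exp (Complex.I * t) - 1 - Complex.I * t‖ ≤ t ^ 2 / 2 := by
  have key : ∀ x : ℝ, HasDerivAt
      (fun u : ℝ => Complex.exp (Complex.I * u) - 1 - Complex.I * u)
      (Complex.I * (Complex.exp (Complex.I * x) - 1)) x := by
    intro x
    have h1 : HasDerivAt (fun z : ℂ => Complex.exp (Complex.I * z))
        (Complex.exp (Complex.I * x) * Complex.I) (x : ℂ) := by
      have h0 := (Complex.hasDerivAt_exp (Complex.I * x)).comp (x : ℂ)
        ((hasDerivAt_id (x : ℂ)).const_mul Complex.I)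
      simp only [mul_one] at h0
      exact h0
    have h1' : HasDerivAt (fun u : ℝ => Complex.exp (Complex.I * u))
        (Complex.exp (Complex.I * x) * Complex.I) x := h1.comp_ofReal
    have h2 : HasDerivAt (fun u : ℝ => Complex.I * (u : ℂ)) Complex.I x := by
      simpa using (Complex.ofRealCLM.hasDerivAt (x := x)).const_mul Complex.I
    have : HasDerivAt (fun u : ℝ => Complex.exp (Complex.I * u) - 1 - Complex.I * u)
        (Complex.exp (Complex.I * x) * Complex.I - Complex.I) x := (h1'.sub_const 1).sub h2
    convert this using 1
    ring
  have hcont : Continuous fun u : ℝ => Complex.I * (Complex.exp (Complex.I * u) - 1) := by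
    fun_prop
  have hint : (∫ u in (0:ℝ)..t, Complex.I * (Complex.exp (Complex.I * u) - 1))
      = Complex.exp (Complex.I * t) - 1 - Complex.I * t := by
    rw [intervalIntegral.integral_eq_sub_of_hasDerivAt (fun x _ => key x)
      (hcont.intervalIntegrable 0 t)]
    simp
  rw [← hint]
  have hb : ∀ u : ℝ, ‖Complex.I * (Complex.exp (Complex.I * u) - 1)‖ ≤ |u| := by
    intro u
    rw [norm_mul, Complex.norm_I, one_mul]
    exact norm_exp_I_mul_sub_one_le u
  have := intervalIntegral.norm_integral_le_abs_of_norm_le (μ := MeasureTheory.volume)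
    (a := 0) (b := t) (f := fun u => Complex.I * (Complex.exp (Complex.I * u) - 1))
    (g := fun u => |u|) (Filter.Eventually.of_forall fun u => hb u)
    (continuous_abs.intervalIntegrable 0 t)
  refine this.trans (le_of_eq ?_)
  rcases le_total 0 t with ht | ht
  · rw [intervalIntegral.integral_congr (g := fun u => u) (fun u hu => by
      rw [Set.uIcc_of_le ht] at hu; exact abs_of_nonneg hu.1)]
    rw [integral_id, show ((t:ℝ)^2 - 0^2)/2 = t^2/2 by ring, abs_of_nonneg (by positivity)]
  · rw [intervalIntegral.integral_congr (g := fun u => -u) (fun u hu => by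
      rw [Set.uIcc_of_ge ht] at hu; exact abs_of_nonpos hu.2)]
    rw [intervalIntegral.integral_neg, integral_id, abs_neg,
      show ((t:ℝ)^2 - 0^2)/2 = t^2/2 by ring, abs_of_nonneg (by positivity)]

section comb
variable (f : Fin 3 → Fin 2 → ℝ)

lemma pic_sum_prod : ∑ j : Fin 3 → Fin 2, ∏ s, f s (j s) = ∏ s, ∑ c, f s c :=
  (Fintype.prod_sum f).symm

lemma pic_sum_prod_mul (s₀ : Fin 3) (g : Fin 2 → ℝ) :
    ∑ j : Fin 3 → Fin 2, (∏ s, f s (j s)) * g (j s₀)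
      = ∏ s, ∑ c, (Function.update f s₀ (fun c => f s₀ c * g c)) s c := by
  rw [Fintype.prod_sum]
  apply Finset.sum_congr rfl
  intro j _
  rw [← Finset.mul_prod_erase univ (fun s => (Function.update f s₀ fun c => f s₀ c * g c) s (j s))
      (mem_univ s₀),
    ← Finset.mul_prod_erase univ (fun s => f s (j s)) (mem_univ s₀)]
  have herase : ∏ s ∈ univ.erase s₀, (Function.update f s₀ (fun c => f s₀ c * g c)) s (j s)
      = ∏ s ∈ univ.erase s₀, f s (j s) :=
    Finset.prod_congr rfl fun s hs => by
      rw [Function.update_of_ne (Finset.ne_of_mem_erase hs)]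
  rw [herase, Function.update_self]
  ring
end comb



open Finset in
/-- Second-order (trilinear) PIC interpolation error bound for the complex
exponential `g_y(x) = exp(-i⟨y,x⟩)`: the error is at most `(9/2)|y|²(L/H)²`. -/
theorem trilinear_pic_exp_error
    (lam : Fin 3 → ℝ) (hlam : ∀ s, lam s ∈ Set.Icc (0 : ℝ) 1)
    (L : ℝ) (H : ℝ) (hL : 0 < L) (hH : 0 < H)
    (base : EuclideanSpace ℝ (Fin 3))
    (X : EuclideanSpace ℝ (Fin 3)) (hX : ∀ s, X s = base s + lam s * (L / H))
    (Xg : (Fin 3 → Fin 2) → EuclideanSpace ℝ (Fin 3))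
    (hXg : ∀ j s, Xg j s = base s + (j s : ℝ) * (L / H))
    (y : EuclideanSpace ℝ (Fin 3)) :
    ‖Complex.exp (-Complex.I * ((∑ s, y s * X s : ℝ) : ℂ)) -
        ∑ j : Fin 3 → Fin 2,
          ((∏ s, (1 - (j s : ℝ) + (2 * (j s : ℝ) - 1) * lam s) : ℝ) : ℂ) *
            Complex.exp (-Complex.I * ((∑ s, y s * Xg j s : ℝ) : ℂ))‖ ≤
      (9 / 2) * ‖y‖ ^ 2 * (L / H) ^ 2 := by
  set f : Fin 3 → Fin 2 → ℝ := fun s c => 1 - (c : ℝ) + (2 * (c : ℝ) - 1) * lam s with hf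
  set F : (Fin 3 → Fin 2) → ℝ := fun j => ∏ s, f s (j s) with hF
  set A : ℝ := ∑ s, y s * X s with hA
  set T : (Fin 3 → Fin 2) → ℝ := fun j => ∑ s, y s * (((j s : ℝ) - lam s) * (L / H)) with hT
  -- basic weight facts
  have hf0 : ∀ s c, 0 ≤ f s c := by
    intro s c
    fin_cases c <;> simp [hf] <;> [linarith [(hlam s).2]; linarith [(hlam s).1]]
  have hfsum : ∀ s, ∑ c : Fin 2, f s c = 1 := by
    intro s; simp [hf, Fin.sum_univ_two]; ring
  have hfmom : ∀ s, ∑ c : Fin 2, f s c * ((c : ℝ) - lam s) = 0 := by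
    intro s; simp [hf, Fin.sum_univ_two]; ring
  have hF0 : ∀ j, 0 ≤ F j := fun j => Finset.prod_nonneg fun s _ => hf0 s (j s)
  have hsum1 : ∑ j : Fin 3 → Fin 2, F j = 1 := by
    simp only [hF]
    rw [pic_sum_prod]; simp [hfsum]
  have hmom : ∀ s₀, ∑ j : Fin 3 → Fin 2, F j * ((j s₀ : ℝ) - lam s₀) = 0 := by
    intro s₀
    simp only [hF]
    rw [pic_sum_prod_mul f s₀ (fun c => (c : ℝ) - lam s₀)]
    apply Finset.prod_eq_zero (mem_univ s₀)
    rw [Function.update_self]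
    exact hfmom s₀
  have hFT : ∑ j : Fin 3 → Fin 2, F j * T j = 0 := by
    have h1 : ∀ j : Fin 3 → Fin 2,
        F j * T j = ∑ s, (y s * (L / H)) * (F j * ((j s : ℝ) - lam s)) := by
      intro j
      rw [hT, Finset.mul_sum]
      exact Finset.sum_congr rfl fun s _ => by ring
    rw [Finset.sum_congr rfl fun j _ => h1 j, Finset.sum_comm]
    apply Finset.sum_eq_zero
    intro s _
    rw [← Finset.mul_sum, hmom s, mul_zero]
  -- coordinate-wise bound on T
  have hynorm : ∀ s, |y s| ≤ ‖y‖ := by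
    intro s
    have h1 : ‖y‖ ^ 2 = ∑ i, y i ^ 2 := by
      rw [EuclideanSpace.norm_eq]
      rw [Real.sq_sqrt (Finset.sum_nonneg fun i _ => sq_nonneg _)]
      exact Finset.sum_congr rfl fun i _ => by rw [Real.norm_eq_abs, sq_abs]
    have h2 : y s ^ 2 ≤ ‖y‖ ^ 2 := by
      rw [h1]
      exact Finset.single_le_sum (fun i _ => sq_nonneg (y i)) (mem_univ s)
    calc |y s| = Real.sqrt (y s ^ 2) := (Real.sqrt_sq_eq_abs _).symm
      _ ≤ Real.sqrt (‖y‖ ^ 2) := Real.sqrt_le_sqrt h2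
      _ = ‖y‖ := Real.sqrt_sq (norm_nonneg _)
  have hh : (0 : ℝ) < L / H := div_pos hL hH
  have hTbound : ∀ j : Fin 3 → Fin 2, |T j| ≤ 3 * ‖y‖ * (L / H) := by
    intro j
    calc |T j| ≤ ∑ s, |y s * (((j s : ℝ) - lam s) * (L / H))| := Finset.abs_sum_le_sum_abs _ _
      _ ≤ ∑ _s : Fin 3, ‖y‖ * (L / H) := by
          apply Finset.sum_le_sum
          intro s _
          rw [abs_mul, abs_mul]
          have hd : ∀ c : Fin 2, |(c : ℝ) - lam s| ≤ 1 := by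
            intro c
            fin_cases c <;>
              · rw [abs_le]; push_cast
                constructor <;> linarith [(hlam s).1, (hlam s).2]
          calc |y s| * (|(j s : ℝ) - lam s| * |L / H|)
              ≤ ‖y‖ * (1 * (L / H)) := by
                apply mul_le_mul (hynorm s) _ (by positivity) (norm_nonneg y)
                rw [abs_of_pos hh]
                exact mul_le_mul_of_nonneg_right (hd (j s)) hh.le
            _ = ‖y‖ * (L / H) := by ring
      _ = 3 * ‖y‖ * (L / H) := by simp [Finset.sum_const]; ring
  have hTsq : ∀ j : Fin 3 → Fin 2, T j ^ 2 ≤ 9 * ‖y‖ ^ 2 * (L / H) ^ 2 := by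
    intro j
    have := hTbound j
    nlinarith [abs_nonneg (T j), sq_abs (T j)]
  -- rewrite phases
  have hXgX : ∀ j : Fin 3 → Fin 2, (∑ s, y s * Xg j s) = A + T j := by
    intro j
    rw [hA, hT, ← Finset.sum_add_distrib]
    apply Finset.sum_congr rfl
    intro s _
    rw [hXg, hX]
    ring
  have hexp : ∀ j : Fin 3 → Fin 2,
      Complex.exp (-Complex.I * ((∑ s, y s * Xg j s : ℝ) : ℂ))
        = Complex.exp (-Complex.I * (A : ℂ)) * Complex.exp (-Complex.I * (T j : ℂ)) := by
    intro j
    rw [hXgX j, ← Complex.exp_add]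
    push_cast
    ring_nf
  calc ‖Complex.exp (-Complex.I * (A : ℂ)) -
        ∑ j : Fin 3 → Fin 2, ((F j : ℝ) : ℂ) *
          Complex.exp (-Complex.I * ((∑ s, y s * Xg j s : ℝ) : ℂ))‖
      = ‖Complex.exp (-Complex.I * (A : ℂ))‖ *
          ‖1 - ∑ j : Fin 3 → Fin 2, ((F j : ℝ) : ℂ) * Complex.exp (-Complex.I * (T j : ℂ))‖ := by
        rw [← norm_mul]
        congr 1
        rw [mul_sub, mul_one, Finset.mul_sum]
        congr 1
        apply Finset.sum_congr rfl
        intro j _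
        rw [hexp j]
        ring
    _ = ‖1 - ∑ j : Fin 3 → Fin 2, ((F j : ℝ) : ℂ) * Complex.exp (-Complex.I * (T j : ℂ))‖ := by
        rw [show ‖Complex.exp (-Complex.I * (A : ℂ))‖ = 1 by
          rw [Complex.norm_exp]
          simp, one_mul]
    _ = ‖∑ j : Fin 3 → Fin 2, ((F j : ℝ) : ℂ) *
          (1 - Complex.exp (-Complex.I * (T j : ℂ)) - Complex.I * (T j : ℂ))‖ := by
        congr 1
        have e1 : ∑ j : Fin 3 → Fin 2, ((F j : ℝ) : ℂ) = 1 := by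
          exact_mod_cast hsum1
        have e2 : ∑ j : Fin 3 → Fin 2, ((F j : ℝ) : ℂ) * ((T j : ℝ) : ℂ) = 0 := by
          exact_mod_cast hFT
        have e3 : ∑ j : Fin 3 → Fin 2, ((F j : ℝ) : ℂ) *
            (1 - Complex.exp (-Complex.I * (T j : ℂ)) - Complex.I * (T j : ℂ))
            = (∑ j : Fin 3 → Fin 2, ((F j : ℝ) : ℂ))
              - (∑ j : Fin 3 → Fin 2, ((F j : ℝ) : ℂ) * Complex.exp (-Complex.I * (T j : ℂ)))
              - Complex.I * ∑ j : Fin 3 → Fin 2, ((F j : ℝ) : ℂ) * ((T j : ℝ) : ℂ) := by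
          rw [Finset.mul_sum, ← Finset.sum_sub_distrib, ← Finset.sum_sub_distrib]
          apply Finset.sum_congr rfl
          intro j _
          ring
        rw [e3, e1, e2, mul_zero, sub_zero]
    _ ≤ ∑ j : Fin 3 → Fin 2, ‖((F j : ℝ) : ℂ) *
          (1 - Complex.exp (-Complex.I * (T j : ℂ)) - Complex.I * (T j : ℂ))‖ :=
        norm_sum_le _ _
    _ ≤ ∑ j : Fin 3 → Fin 2, F j * ((9 / 2) * ‖y‖ ^ 2 * (L / H) ^ 2) := by
        apply Finset.sum_le_sum
        intro j _
        rw [norm_mul, Complex.norm_real, Real.norm_eq_abs, abs_of_nonneg (hF0 j)]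
        apply mul_le_mul_of_nonneg_left _ (hF0 j)
        have h1 : (1 : ℂ) - Complex.exp (-Complex.I * (T j : ℂ)) - Complex.I * (T j : ℂ)
            = -(Complex.exp (Complex.I * ((-(T j) : ℝ) : ℂ)) - 1 - Complex.I * ((-(T j) : ℝ) : ℂ)) := by
          push_cast
          ring_nf
        rw [h1, norm_neg]
        calc ‖Complex.exp (Complex.I * ((-(T j) : ℝ) : ℂ)) - 1 - Complex.I * ((-(T j) : ℝ) : ℂ)‖
            ≤ (-(T j)) ^ 2 / 2 := norm_exp_I_mul_sub_one_sub_le (-(T j))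
          _ = T j ^ 2 / 2 := by ring
          _ ≤ (9 / 2) * ‖y‖ ^ 2 * (L / H) ^ 2 := by
              have := hTsq j
              linarith
    _ = (9 / 2) * ‖y‖ ^ 2 * (L / H) ^ 2 := by
        rw [← Finset.sum_mul, hsum1, one_mul]
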